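/- Assume q^{2l} = 1 where l ≥ 2 is the smallest positive integer with this property. Let c, x₀ ∈ ℂ and x₊ ∈ ℂ with x₊ ≠ 0; set c'₂ := q²x₀² − qcx₀ and d² := c² − λ²c'₂. Let V = ℂ^l with basis w₀, …, w_{l−1} and define: ρ_C w_p = c w_p; ρ₀ w_p = (q^{−2p} x₀ + q^{−p} [p] c) w_p; ρ₊ w_p = x₊ w_{p+1 mod l}; ρ₋ w₀ = 0 and, for 1 ≤ p ≤ l−1, ρ₋ w_p = x₊⁻¹ λ⁻² ( −d² + (1+q²) c (c−λx₀) q^{−2p} − q² (c−λx₀)² q^{−4p} ) w_{p−1}. Then (ρ₀, ρ₊, ρ₋, ρ_C) is a representation of B on V, and if moreover c − λx₀ ≠ 0 it is irreducible. -/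

import Mathlib

noncomputable section

namespace SL2q

/-- The q-number [p] = (q^p − q^{−p})/(q − q⁻¹). -/
def qNum (q : ℂ) (p : ℕ) : ℂ := (q ^ p - q⁻¹ ^ p) / (q - q⁻¹)

lemma auxA (q v c a u : ℂ) (hv : q * v = 1) (hlam : q - v ≠ 0) :
    q ^ 2 * ((c - a * (v ^ 2 * u)) / (q - v)) - (c - a * u) / (q - v) = q * c := by
  field_simp
  linear_combination (c - a*u*(q*v+1)) * hv

lemma auxB (q v c a u : ℂ) (hv : q * v = 1) (hlam : q - v ≠ 0) :
    v ^ 2 * ((c - a * u) / (q - v)) - (c - a * (v ^ 2 * u)) / (q - v) = -(v * c) := by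
  field_simp
  linear_combination c * hv

lemma auxC (q v c x0 u : ℂ) (hv : q * v = 1) (hlam : q - v ≠ 0) :
    ((q - v) ^ 2)⁻¹ *
      ((-(c ^ 2 - (q - v) ^ 2 * (q ^ 2 * x0 ^ 2 - q * c * x0))
          + (1 + q ^ 2) * c * (c - (q - v) * x0) * u
          - q ^ 2 * (c - (q - v) * x0) ^ 2 * u ^ 2)
        - (-(c ^ 2 - (q - v) ^ 2 * (q ^ 2 * x0 ^ 2 - q * c * x0))
          + (1 + q ^ 2) * c * (c - (q - v) * x0) * (v ^ 2 * u)
          - q ^ 2 * (c - (q - v) * x0) ^ 2 * (v ^ 2 * u) ^ 2))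
      = (q + v) *
        ((c - (q - v) * ((c - (c - (q - v) * x0) * u) / (q - v)))
          * ((c - (c - (q - v) * x0) * u) / (q - v))) := by
  field_simp
  linear_combination ((-1)*v^1*c^1*x0^1*u^1 + (-1)*q^1*v^2*c^1*x0^1*u^1 + (2)*v^3*c^1*x0^1*u^2 + (2)*q^1*v^4*c^1*x0^1*u^2 + (1)*q^1*c^1*x0^1*u^1 + (1)*q^2*v^1*c^1*x0^1*u^1 + (-2)*q^1*v^2*c^1*x0^1*u^2 + (-2)*q^2*v^3*c^1*x0^1*u^2 + (-1)*c^2*u^1 + (-1)*q^1*v^1*c^2*u^1 + (1)*v^2*c^2*u^2 + (1)*q^1*v^3*c^2*u^2 + (1)*v^4*x0^2*u^2 + (1)*q^1*v^5*x0^2*u^2 + (-2)*q^1*v^3*x0^2*u^2 + (-2)*q^2*v^4*x0^2*u^2 + (1)*q^2*v^2*x0^2*u^2 + (1)*q^3*v^3*x0^2*u^2) * hv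

lemma aux_b1 (q v c x0 : ℂ) (hv : q * v = 1) :
    -(c ^ 2 - (q - v) ^ 2 * (q ^ 2 * x0 ^ 2 - q * c * x0))
      + (1 + q ^ 2) * c * (c - (q - v) * x0) * 1
      - q ^ 2 * (c - (q - v) * x0) ^ 2 * 1 ^ 2 = 0 := by
  linear_combination (c*x0*(q-v)) * hv

lemma lam_ne (q : ℂ) (hq : q ≠ 0) (hq2 : q ^ 2 ≠ 1) : q - q⁻¹ ≠ 0 := by
  intro h
  rw [sub_eq_zero] at h
  apply hq2
  rw [sq]
  nth_rewrite 2 [h]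
  exact mul_inv_cancel₀ hq

lemma aux_mu (q c x0 : ℂ) (hq : q ≠ 0) (hlam : q - q⁻¹ ≠ 0) (p : ℕ) :
    q⁻¹ ^ (2 * p) * x0 + q⁻¹ ^ p * qNum q p * c
      = (c - (c - (q - q⁻¹) * x0) * q⁻¹ ^ (2 * p)) / (q - q⁻¹) := by
  have hv : q * q⁻¹ = 1 := mul_inv_cancel₀ hq
  rw [qNum]
  generalize q⁻¹ = v at hv hlam ⊢
  have hvp : q ^ p * v ^ p = 1 := by rw [← mul_pow, hv, one_pow]
  have h2 : v ^ (2 * p) = v ^ p * v ^ p := by rw [two_mul, pow_add]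
  rw [h2]
  field_simp
  linear_combination c * hvp

lemma aux_upow (q : ℂ) (hq : q ≠ 0) (l : ℕ) (hq2l : q ^ (2 * l) = 1)
    (j : ℕ) (hj : j < l) :
    q⁻¹ ^ (2 * ((j + 1) % l)) = q⁻¹ ^ 2 * q⁻¹ ^ (2 * j) := by
  rcases Nat.lt_or_ge (j + 1) l with h | h
  · rw [Nat.mod_eq_of_lt h, ← pow_add]
    ring_nf
  · have hjl : j + 1 = l := by omega
    rw [hjl, Nat.mod_self, mul_zero, pow_zero, ← pow_add]
    have h2 : 2 + 2 * j = 2 * l := by omega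
    rw [h2, inv_pow, hq2l, inv_one]

lemma pow_inj2 (q : ℂ) (hq : q ≠ 0) (l : ℕ)
    (hmin : ∀ m : ℕ, 0 < m → m < l → q ^ (2 * m) ≠ 1) {i j : ℕ}
    (hi : i < l) (hj : j < l) (h : q⁻¹ ^ (2 * i) = q⁻¹ ^ (2 * j)) : i = j := by
  have h' : q ^ (2 * i) = q ^ (2 * j) := by
    rw [inv_pow, inv_pow] at h
    exact inv_injective h
  have key : ∀ a b : ℕ, a ≤ b → b < l → q ^ (2 * a) = q ^ (2 * b) → a = b := by
    intro a b hab hbl he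
    by_contra hne
    have hsplit : q ^ (2 * a) * q ^ (2 * (b - a)) = q ^ (2 * a) * 1 := by
      rw [mul_one, ← pow_add]
      rw [he]
      congr 1
      omega
    have h1 : q ^ (2 * (b - a)) = 1 := mul_left_cancel₀ (pow_ne_zero _ hq) hsplit
    exact hmin (b - a) (by omega) (by omega) h1
  rcases le_total i j with hij | hij
  · exact key i j hij hj h'
  · exact (key j i hij hi h'.symm).symm

lemma irred_aux (l : ℕ) (hl0 : 0 < l) (g : Fin l → ℂ) (hg : Function.Injective g)
    (xp : ℂ) (hxp : xp ≠ 0)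
    (Mp : Matrix (Fin l) (Fin l) ℂ)
    (hMp : ∀ i j : Fin l, Mp i j = if (i : ℕ) = ((j : ℕ) + 1) % l then xp else 0)
    (W : Submodule ℂ (Fin l → ℂ))
    (h0 : ∀ v ∈ W, (Matrix.diagonal g).mulVec v ∈ W)
    (hp : ∀ v ∈ W, Mp.mulVec v ∈ W) :
    W = ⊥ ∨ W = ⊤ := by
  classical
  rcases eq_or_ne W ⊥ with h | h
  · exact Or.inl h
  right
  obtain ⟨v0, hv0W, hv00⟩ := (Submodule.ne_bot_iff W).mp h
  have main : ∀ n : ℕ, ∀ v, v ∈ W → v ≠ 0 →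
      (Finset.univ.filter fun p => v p ≠ 0).card ≤ n →
      ∃ p : Fin l, Pi.single p (1 : ℂ) ∈ W := by
    intro n
    induction n with
    | zero =>
      intro v hvW hv0 hcard
      exfalso
      apply hv0
      funext p
      rw [Pi.zero_apply]
      by_contra hp0
      have hmem : p ∈ Finset.univ.filter fun p => v p ≠ 0 := by simp [hp0]
      have := Finset.card_pos.mpr ⟨p, hmem⟩
      omega
    | succ n ih =>
      intro v hvW hv0 hcard
      by_cases h1 : (Finset.univ.filter fun p => v p ≠ 0).card ≤ 1
      · obtain ⟨p, hp⟩ : ∃ p, v p ≠ 0 := by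
          by_contra hc
          push_neg at hc
          exact hv0 (funext fun p => by simpa using hc p)
        refine ⟨p, ?_⟩
        have hsingle : (v p)⁻¹ • v = Pi.single p (1 : ℂ) := by
          funext j
          by_cases hj : j = p
          · subst hj
            simp [Pi.single_apply, inv_mul_cancel₀ hp]
          · have hvj : v j = 0 := by
              by_contra hj0
              have h2 : 1 < (Finset.univ.filter fun p => v p ≠ 0).card :=
                Finset.one_lt_card.mpr ⟨j, by simp [hj0], p, by simp [hp], hj⟩
              omega
            simp [Pi.single_apply, hj, hvj]
        rw [← hsingle]
        exact W.smul_mem _ hvW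
      · push_neg at h1
        obtain ⟨p0, hp0, p1, hp1, hne⟩ := Finset.one_lt_card.mp h1
        simp only [Finset.mem_filter, Finset.mem_univ, true_and] at hp0 hp1
        set w : Fin l → ℂ := (Matrix.diagonal g).mulVec v - g p1 • v with hw
        have hwW : w ∈ W := W.sub_mem (h0 v hvW) (W.smul_mem _ hvW)
        have hwj : ∀ j, w j = (g j - g p1) * v j := by
          intro j
          simp only [hw, Pi.sub_apply, Matrix.mulVec_diagonal, Pi.smul_apply, smul_eq_mul]
          ring
        have hw0 : w ≠ 0 := by
          intro hz
          have h2 := congrFun hz p0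
          rw [hwj] at h2
          simp only [Pi.zero_apply, mul_eq_zero] at h2
          rcases h2 with h2 | h2
          · exact hne (hg (sub_eq_zero.mp h2))
          · exact hp0 h2
        have hsub : (Finset.univ.filter fun p => w p ≠ 0) ⊆
            (Finset.univ.filter fun p => v p ≠ 0).erase p1 := by
          intro j hj
          simp only [Finset.mem_filter, Finset.mem_univ, true_and] at hj
          rw [Finset.mem_erase]
          constructor
          · intro hjp
            apply hj
            rw [hjp, hwj]
            ring
          · simp only [Finset.mem_filter, Finset.mem_univ, true_and]
            intro hvj
            apply hj
            rw [hwj, hvj, mul_zero]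
        apply ih w hwW hw0
        have hc1 := Finset.card_le_card hsub
        have hc2 : p1 ∈ Finset.univ.filter fun p => v p ≠ 0 := by simp [hp1]
        have hc3 := Finset.card_erase_of_mem hc2
        omega
  obtain ⟨p, hpW⟩ := main _ v0 hv0W hv00 le_rfl
  have shift : ∀ r : Fin l, Pi.single r (1 : ℂ) ∈ W →
      Pi.single (⟨((r : ℕ) + 1) % l, Nat.mod_lt _ hl0⟩ : Fin l) (1 : ℂ) ∈ W := by
    intro r hr
    have h1 := hp _ hr
    have h2 : Mp.mulVec (Pi.single r 1) =
        xp • (Pi.single (⟨((r : ℕ) + 1) % l, Nat.mod_lt _ hl0⟩ : Fin l) (1 : ℂ) : Fin l → ℂ) := by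
      rw [Matrix.mulVec_single_one]
      funext i
      show Mp i r = _
      rw [hMp]
      simp only [Pi.smul_apply, Pi.single_apply, smul_eq_mul, mul_one]
      by_cases hi : (i : ℕ) = ((r : ℕ) + 1) % l
      · rw [if_pos hi, if_pos (Fin.ext hi), mul_one]
      · rw [if_neg hi, if_neg (fun hh => hi (by rw [hh])), mul_zero]
    rw [h2] at h1
    have h3 := W.smul_mem xp⁻¹ h1
    rw [smul_smul, inv_mul_cancel₀ hxp, one_smul] at h3
    exact h3
  have all : ∀ k : ℕ, Pi.single (⟨((p : ℕ) + k) % l, Nat.mod_lt _ hl0⟩ : Fin l) (1 : ℂ) ∈ W := by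
    intro k
    induction k with
    | zero =>
      have : (⟨((p : ℕ) + 0) % l, Nat.mod_lt _ hl0⟩ : Fin l) = p := by
        apply Fin.ext
        simp [Nat.mod_eq_of_lt p.isLt]
      rw [this]
      exact hpW
    | succ k ihk =>
      have h4 := shift _ ihk
      have h5 : (⟨((((p : ℕ) + k) % l : ℕ) + 1) % l, Nat.mod_lt _ hl0⟩ : Fin l)
          = (⟨((p : ℕ) + (k + 1)) % l, Nat.mod_lt _ hl0⟩ : Fin l) := by
        apply Fin.ext
        show (((p : ℕ) + k) % l + 1) % l = ((p : ℕ) + (k + 1)) % l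
        rw [Nat.mod_add_mod, Nat.add_assoc]
      rw [h5] at h4
      exact h4
  rw [Submodule.eq_top_iff']
  intro x
  have hx : x = ∑ j : Fin l, x j • (Pi.single j (1 : ℂ) : Fin l → ℂ) := by
    rw [← Finset.univ_sum_single x]
    congr 1
    funext j
    funext m
    simp only [Pi.single_apply, Pi.smul_apply, smul_eq_mul]
    split <;> simp
  rw [hx]
  apply Submodule.sum_mem
  intro j _
  have hexists : ∃ k : ℕ, (⟨((p : ℕ) + k) % l, Nat.mod_lt _ hl0⟩ : Fin l) = j := by
    refine ⟨l - (p : ℕ) + (j : ℕ), Fin.ext ?_⟩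
    show ((p : ℕ) + (l - (p : ℕ) + (j : ℕ))) % l = (j : ℕ)
    have hple : (p : ℕ) < l := p.isLt
    have heq : (p : ℕ) + (l - (p : ℕ) + (j : ℕ)) = l + (j : ℕ) := by omega
    rw [heq, Nat.add_mod_left, Nat.mod_eq_of_lt j.isLt]
  obtain ⟨k, hk⟩ := hexists
  exact W.smul_mem _ (hk ▸ all k)

/-- the explicit l-dimensional (semi-periodic) action with
x₊ ≠ 0, c'₂ = q²x₀² − qcx₀ (basis w₀,…,w_{l−1}):
ρ_C w_p = c w_p, ρ₀ w_p = (q^{−2p}x₀ + q^{−p}[p]c) w_p, ρ₊ w_p = x₊ w_{p+1 mod l},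
ρ₋ w₀ = 0 and ρ₋ w_p = x₊⁻¹λ⁻²(−d² + (1+q²)c(c−λx₀)q^{−2p} − q²(c−λx₀)²q^{−4p}) w_{p−1}
defines a representation of B, irreducible whenever c − λx₀ ≠ 0. -/
theorem semiperiodic_rep (q : ℂ) (hq : q ≠ 0) (hq2 : q ^ 2 ≠ 1)
    (l : ℕ) (hl : 2 ≤ l) (hq2l : q ^ (2 * l) = 1)
    (hmin : ∀ m : ℕ, 0 < m → m < l → q ^ (2 * m) ≠ 1)
    (c x0 xp : ℂ) (hxp : xp ≠ 0) :
    let c2 : ℂ := q ^ 2 * x0 ^ 2 - q * c * x0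
    let d2 : ℂ := c ^ 2 - (q - q⁻¹) ^ 2 * c2
    let MC : Matrix (Fin l) (Fin l) ℂ := c • 1
    let M0 : Matrix (Fin l) (Fin l) ℂ :=
      Matrix.diagonal fun p => q⁻¹ ^ (2 * (p : ℕ)) * x0 + q⁻¹ ^ (p : ℕ) * qNum q (p : ℕ) * c
    let Mp : Matrix (Fin l) (Fin l) ℂ :=
      Matrix.of fun i j => if (i : ℕ) = ((j : ℕ) + 1) % l then xp else 0
    let Mm : Matrix (Fin l) (Fin l) ℂ :=
      Matrix.of fun i j =>
        if (i : ℕ) + 1 = (j : ℕ) then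
          xp⁻¹ * ((q - q⁻¹) ^ 2)⁻¹ *
            (-d2 + (1 + q ^ 2) * c * (c - (q - q⁻¹) * x0) * q⁻¹ ^ (2 * (j : ℕ))
              - q ^ 2 * (c - (q - q⁻¹) * x0) ^ 2 * q⁻¹ ^ (4 * (j : ℕ)))
        else 0
    (((q ^ 2 : ℂ) • (M0 * Mp) - Mp * M0 = q • (MC * Mp)) ∧
     ((q⁻¹ ^ 2 : ℂ) • (M0 * Mm) - Mm * M0 = -(q⁻¹ • (MC * Mm))) ∧
     (Mp * Mm - Mm * Mp = ((q + q⁻¹) : ℂ) • ((MC - (q - q⁻¹) • M0) * M0)) ∧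
     (MC * M0 = M0 * MC) ∧ (MC * Mp = Mp * MC) ∧ (MC * Mm = Mm * MC)) ∧
    (c - (q - q⁻¹) * x0 ≠ 0 →
      ∀ W : Submodule ℂ (Fin l → ℂ),
        (∀ v ∈ W, M0.mulVec v ∈ W) → (∀ v ∈ W, Mp.mulVec v ∈ W) →
        (∀ v ∈ W, Mm.mulVec v ∈ W) → (∀ v ∈ W, MC.mulVec v ∈ W) →
        W = ⊥ ∨ W = ⊤) := by
  intro c2 d2 MC M0 Mp Mm
  have hlam : q - q⁻¹ ≠ 0 := lam_ne q hq hq2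
  have hv : q * q⁻¹ = 1 := mul_inv_cancel₀ hq
  have hl0 : 0 < l := by omega
  set f : ℕ → ℂ := fun n => (c - (c - (q - q⁻¹) * x0) * q⁻¹ ^ (2 * n)) / (q - q⁻¹) with hf
  set K : ℕ → ℂ := fun n =>
    xp⁻¹ * ((q - q⁻¹) ^ 2)⁻¹ *
      (-d2 + (1 + q ^ 2) * c * (c - (q - q⁻¹) * x0) * q⁻¹ ^ (2 * n)
        - q ^ 2 * (c - (q - q⁻¹) * x0) ^ 2 * q⁻¹ ^ (4 * n)) with hK
  have hMC : MC = c • (1 : Matrix (Fin l) (Fin l) ℂ) := rfl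
  have hM0 : M0 = Matrix.diagonal (fun p : Fin l => f (p : ℕ)) := by
    show Matrix.diagonal _ = _
    exact congrArg Matrix.diagonal (funext fun p => aux_mu q c x0 hq hlam (p : ℕ))
  have hMp : ∀ i j : Fin l, Mp i j = if (i : ℕ) = ((j : ℕ) + 1) % l then xp else 0 :=
    fun i j => rfl
  have hMm : ∀ i j : Fin l, Mm i j = if (i : ℕ) + 1 = (j : ℕ) then K (j : ℕ) else 0 :=
    fun i j => rfl
  have hxK : ∀ n : ℕ, xp * K n =
      ((q - q⁻¹) ^ 2)⁻¹ *
        (-d2 + (1 + q ^ 2) * c * (c - (q - q⁻¹) * x0) * q⁻¹ ^ (2 * n)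
          - q ^ 2 * (c - (q - q⁻¹) * x0) ^ 2 * q⁻¹ ^ (4 * n)) := by
    intro n
    rw [hK]
    simp only []
    rw [← mul_assoc, ← mul_assoc, mul_inv_cancel₀ hxp, one_mul]
  have hd2 : d2 = c ^ 2 - (q - q⁻¹) ^ 2 * (q ^ 2 * x0 ^ 2 - q * c * x0) := rfl
  constructor
  · refine ⟨?_, ?_, ?_, ?_, ?_, ?_⟩
    · -- relation 1
      ext i j
      rw [hM0, hMC, Matrix.smul_mul, Matrix.one_mul]
      simp only [Matrix.sub_apply, Matrix.smul_apply, Matrix.diagonal_mul, Matrix.mul_diagonal,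
        smul_eq_mul]
      rw [hMp i j]
      split_ifs with h
      · have hui : q⁻¹ ^ (2 * (i : ℕ)) = q⁻¹ ^ 2 * q⁻¹ ^ (2 * (j : ℕ)) := by
          rw [h]
          exact aux_upow q hq l hq2l (j : ℕ) j.isLt
        have hA := auxA q q⁻¹ c (c - (q - q⁻¹) * x0) (q⁻¹ ^ (2 * (j : ℕ))) hv hlam
        rw [hf]
        simp only []
        rw [hui]
        linear_combination xp * hA
      · ring
    · -- relation 2
      ext i j
      rw [hM0, hMC, Matrix.smul_mul, Matrix.one_mul]
      simp only [Matrix.sub_apply, Matrix.smul_apply, Matrix.diagonal_mul, Matrix.mul_diagonal,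
        Matrix.neg_apply, smul_eq_mul]
      rw [hMm i j]
      split_ifs with h
      · have huj : q⁻¹ ^ (2 * (j : ℕ)) = q⁻¹ ^ 2 * q⁻¹ ^ (2 * (i : ℕ)) := by
          rw [← h, show 2 * ((i : ℕ) + 1) = 2 + 2 * (i : ℕ) by ring, pow_add]
        have hB := auxB q q⁻¹ c (c - (q - q⁻¹) * x0) (q⁻¹ ^ (2 * (i : ℕ))) hv hlam
        rw [hf]
        simp only []
        rw [huj]
        linear_combination K (j : ℕ) * hB
      · ring
    · -- relation 3
      have hPM : ∀ i j : Fin l, (Mp * Mm) i j =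
          if (i : ℕ) = (j : ℕ) ∧ (j : ℕ) ≠ 0 then xp * K (j : ℕ) else 0 := by
        intro i j
        rw [Matrix.mul_apply]
        rcases Nat.eq_zero_or_pos (j : ℕ) with hj0 | hj0
        · rw [if_neg (by simp [hj0])]
          apply Finset.sum_eq_zero
          intro k _
          rw [hMm k j, if_neg (by omega), mul_zero]
        · have hjlt : (j : ℕ) - 1 < l := by have := j.isLt; omega
          have step : ∀ k : Fin l, Mp i k * Mm k j =
              if k = (⟨(j : ℕ) - 1, hjlt⟩ : Fin l) then
                (if (i : ℕ) = (j : ℕ) then xp else 0) * K (j : ℕ) else 0 := by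
            intro k
            by_cases hk : k = (⟨(j : ℕ) - 1, hjlt⟩ : Fin l)
            · rw [if_pos hk, hk, hMp, hMm]
              have h1 : ((⟨(j : ℕ) - 1, hjlt⟩ : Fin l) : ℕ) + 1 = (j : ℕ) := by
                show (j : ℕ) - 1 + 1 = (j : ℕ); omega
              rw [h1, Nat.mod_eq_of_lt j.isLt, if_pos rfl]
            · rw [if_neg hk, hMp, hMm]
              have h2 : ¬ ((k : ℕ) + 1 = (j : ℕ)) := by
                intro hc
                apply hk
                apply Fin.ext
                show (k : ℕ) = (j : ℕ) - 1
                omega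
              rw [if_neg h2, mul_zero]
          rw [Finset.sum_congr rfl (fun k _ => step k),
            Finset.sum_ite_eq' Finset.univ _ _, if_pos (Finset.mem_univ _)]
          by_cases hij : (i : ℕ) = (j : ℕ)
          · rw [if_pos hij, if_pos ⟨hij, by omega⟩]
          · rw [if_neg hij, if_neg (by tauto), zero_mul]
      have hMP : ∀ i j : Fin l, (Mm * Mp) i j =
          if (i : ℕ) + 1 = ((j : ℕ) + 1) % l then xp * K (((j : ℕ) + 1) % l) else 0 := by
        intro i j
        rw [Matrix.mul_apply]
        have hklt : ((j : ℕ) + 1) % l < l := Nat.mod_lt _ hl0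
        have step : ∀ k : Fin l, Mm i k * Mp k j =
            if k = (⟨((j : ℕ) + 1) % l, hklt⟩ : Fin l) then
              (if (i : ℕ) + 1 = ((j : ℕ) + 1) % l then xp * K (((j : ℕ) + 1) % l) else 0)
            else 0 := by
          intro k
          by_cases hk : k = (⟨((j : ℕ) + 1) % l, hklt⟩ : Fin l)
          · rw [if_pos hk, hk, hMp, hMm]
            show (if (i : ℕ) + 1 = ((j : ℕ) + 1) % l then K (((j : ℕ) + 1) % l) else 0) *
                (if ((j : ℕ) + 1) % l = ((j : ℕ) + 1) % l then xp else 0) = _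
            rw [if_pos rfl]
            split_ifs with h
            · ring
            · ring
          · rw [if_neg hk, hMp, hMm]
            have h2 : ¬ ((k : ℕ) = ((j : ℕ) + 1) % l) := fun hc => hk (Fin.ext hc)
            rw [if_neg h2, mul_zero]
        rw [Finset.sum_congr rfl (fun k _ => step k),
          Finset.sum_ite_eq' Finset.univ _ _, if_pos (Finset.mem_univ _)]
      -- core scalar identity
      have hcore : ∀ n : ℕ, n < l →
          (if n ≠ 0 then xp * K n else 0) - (if n + 1 < l then xp * K (n + 1) else 0)
            = (q + q⁻¹) * ((c - (q - q⁻¹) * f n) * f n) := by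
        intro n hn
        have hC := auxC q q⁻¹ c x0 (q⁻¹ ^ (2 * n)) hv hlam
        have hb1 := aux_b1 q q⁻¹ c x0 hv
        have e4 : q⁻¹ ^ (4 * n) = (q⁻¹ ^ (2 * n)) ^ 2 := by
          rw [show 4 * n = 2 * n * 2 by ring, pow_mul]
        rcases Nat.eq_zero_or_pos n with h0 | h0
        · subst h0
          rw [if_neg (by simp), if_pos (by omega), hxK, hf, hd2]
          simp only []
          have e2 : q⁻¹ ^ (2 * (0 + 1)) = q⁻¹ ^ 2 * q⁻¹ ^ (2 * 0) := by ring
          have e3 : q⁻¹ ^ (4 * (0 + 1)) = (q⁻¹ ^ 2 * q⁻¹ ^ (2 * 0)) ^ 2 := by ring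
          rw [e2, e3]
          linear_combination hC - ((q - q⁻¹) ^ 2)⁻¹ * hb1
        · rw [if_pos (by omega), hxK, hf, hd2]
          simp only []
          rcases Nat.lt_or_ge (n + 1) l with h1 | h1
          · rw [if_pos h1, hxK, hd2]
            have e2 : q⁻¹ ^ (2 * (n + 1)) = q⁻¹ ^ 2 * q⁻¹ ^ (2 * n) := by
              rw [show 2 * (n + 1) = 2 + 2 * n by ring, pow_add]
            have e3 : q⁻¹ ^ (4 * (n + 1)) = (q⁻¹ ^ 2 * q⁻¹ ^ (2 * n)) ^ 2 := by
              rw [← e2, show 4 * (n + 1) = 2 * (n + 1) * 2 by ring, pow_mul]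
            rw [e2, e3, e4]
            linear_combination hC
          · rw [if_neg (by omega)]
            have hone : q⁻¹ ^ 2 * q⁻¹ ^ (2 * n) = 1 := by
              rw [← pow_add, show 2 + 2 * n = 2 * l by omega, inv_pow, hq2l, inv_one]
            rw [hone] at hC
            rw [e4]
            linear_combination hC + ((q - q⁻¹) ^ 2)⁻¹ * hb1
      -- assemble
      have hdiagprod : (MC - (q - q⁻¹) • M0) * M0 =
          Matrix.diagonal (fun p : Fin l => (c - (q - q⁻¹) * f (p : ℕ)) * f (p : ℕ)) := by
        rw [hMC, hM0]
        have h1 : c • (1 : Matrix (Fin l) (Fin l) ℂ)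
            - (q - q⁻¹) • Matrix.diagonal (fun p : Fin l => f (p : ℕ))
            = Matrix.diagonal (fun p : Fin l => c - (q - q⁻¹) * f (p : ℕ)) := by
          ext a b
          by_cases hab : a = b
          · subst hab
            simp [Matrix.one_apply_eq, Matrix.diagonal_apply_eq]
          · simp [Matrix.one_apply_ne hab, Matrix.diagonal_apply_ne _ hab]
        rw [h1, Matrix.diagonal_mul_diagonal]
      ext i j
      rw [Matrix.sub_apply, hPM i j, hMP i j, hdiagprod, Matrix.smul_apply, smul_eq_mul]
      by_cases hij : i = j
      · subst hij
        rw [Matrix.diagonal_apply_eq]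
        have hcore' := hcore (i : ℕ) i.isLt
        rcases Nat.lt_or_ge ((i : ℕ) + 1) l with h1 | h1
        · have hmod : ((i : ℕ) + 1) % l = (i : ℕ) + 1 := Nat.mod_eq_of_lt h1
          rw [hmod, if_pos (show (i : ℕ) + 1 = (i : ℕ) + 1 from rfl)]
          rw [if_pos h1] at hcore'
          by_cases hi0 : (i : ℕ) = 0
          · rw [if_neg (show ¬((i : ℕ) = (i : ℕ) ∧ (i : ℕ) ≠ 0) by tauto)]
            rw [if_neg (show ¬((i : ℕ) ≠ 0) by tauto)] at hcore'
            exact hcore'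
          · rw [if_pos (show (i : ℕ) = (i : ℕ) ∧ (i : ℕ) ≠ 0 from ⟨rfl, hi0⟩)]
            rw [if_pos hi0] at hcore'
            exact hcore'
        · have hi1 : (i : ℕ) + 1 = l := by have := i.isLt; omega
          have hmod : ((i : ℕ) + 1) % l = 0 := by rw [hi1, Nat.mod_self]
          rw [hmod, if_neg (show ¬((i : ℕ) + 1 = 0) by omega)]
          rw [if_neg (show ¬((i : ℕ) + 1 < l) by omega)] at hcore'
          by_cases hi0 : (i : ℕ) = 0
          · exfalso; omega
          · rw [if_pos (show (i : ℕ) = (i : ℕ) ∧ (i : ℕ) ≠ 0 from ⟨rfl, hi0⟩)]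
            rw [if_pos hi0] at hcore'
            exact hcore'
      · have hijn : (i : ℕ) ≠ (j : ℕ) := fun hc => hij (Fin.ext hc)
        rw [Matrix.diagonal_apply_ne _ hij, mul_zero,
          if_neg (show ¬((i : ℕ) = (j : ℕ) ∧ (j : ℕ) ≠ 0) by tauto)]
        have h2 : ¬ ((i : ℕ) + 1 = ((j : ℕ) + 1) % l) := by
          rcases Nat.lt_or_ge ((j : ℕ) + 1) l with h1 | h1
          · rw [Nat.mod_eq_of_lt h1]
            omega
          · have hj1 : (j : ℕ) + 1 = l := by have := j.isLt; omega
            rw [hj1, Nat.mod_self]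
            omega
        rw [if_neg h2, sub_zero]
    · rw [hMC, Matrix.smul_mul, Matrix.mul_smul, Matrix.one_mul, Matrix.mul_one]
    · rw [hMC, Matrix.smul_mul, Matrix.mul_smul, Matrix.one_mul, Matrix.mul_one]
    · rw [hMC, Matrix.smul_mul, Matrix.mul_smul, Matrix.one_mul, Matrix.mul_one]
  · -- irreducibility
    intro ha W h0 hp _ _
    have hginj : Function.Injective (fun p : Fin l => f (p : ℕ)) := by
      intro a b hab
      simp only [hf] at hab
      rw [div_eq_div_iff hlam hlam] at hab
      have h1 := mul_right_cancel₀ hlam hab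
      have h2 : (c - (q - q⁻¹) * x0) * q⁻¹ ^ (2 * (a : ℕ))
          = (c - (q - q⁻¹) * x0) * q⁻¹ ^ (2 * (b : ℕ)) := by
        linear_combination -h1
      have h3 := mul_left_cancel₀ ha h2
      exact Fin.ext (pow_inj2 q hq l hmin a.isLt b.isLt h3)
    have h0' : ∀ v ∈ W, (Matrix.diagonal fun p : Fin l => f (p : ℕ)).mulVec v ∈ W := by
      intro v hvW
      rw [← hM0]
      exact h0 v hvW
    exact irred_aux l hl0 _ hginj xp hxp Mp hMp W h0' hp



end SL2q
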